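/- If V_1, V_2 are horizontal vertex subsets at the same level of an augmented tree with |V_1 - V_2| ≥ 2, then the shadows satisfy |S(V_1) - S(V_2)| ≥ 2. -/

import Mathlib

/-- An augmented tree on the words `X*`: the tree of words (with vertical edges from
`v` to `xv`) augmented by a set of horizontal edges joining words of equal length, such
that the endpoints of a horizontal edge have truncations (deleting the first letter)
which either coincide or are again joined by a horizontal edge. -/
structure AugmentedTree (X : Type*) where
  horiz : List X → List X → Prop
  horiz_symm : ∀ u v, horiz u v → horiz v u
  horiz_irrefl : ∀ u, ¬ horiz u u
  horiz_length : ∀ u v, horiz u v → u.length = v.length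
  horiz_push : ∀ (x y : X) (u v : List X), horiz (x :: u) (y :: v) → u = v ∨ horiz u v

/-- The graph of an augmented tree: vertical tree edges together with horizontal edges. -/
def AugmentedTree.graph {X : Type*} (T : AugmentedTree X) : SimpleGraph (List X) where
  Adj u v := T.horiz u v ∨ (∃ x : X, v = x :: u) ∨ (∃ x : X, u = x :: v)
  symm := by
    constructor
    intro u v h
    rcases h with h | ⟨x, rfl⟩ | ⟨x, rfl⟩
    · exact Or.inl (T.horiz_symm u v h)
    · exact Or.inr (Or.inr ⟨x, rfl⟩)
    · exact Or.inr (Or.inl ⟨x, rfl⟩)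
  loopless := by
    constructor
    intro u h
    rcases h with h | ⟨x, hx⟩ | ⟨x, hx⟩
    · exact T.horiz_irrefl u h
    · have := congrArg List.length hx; simp at this
    · have := congrArg List.length hx; simp at this

/-- The cone over a word `v`: the set of words ending in `v`. -/
def Cone {X : Type*} (v : List X) : Set (List X) := {u | ∃ w : List X, u = w ++ v}

/-- The vertex set of the shadow `S(V)`: the union of the cones over elements of `V`. -/
def shadowSet {X : Type*} (V : Set (List X)) : Set (List X) := ⋃ v ∈ V, Cone v

/-- Every vertex is reachable from the empty word. -/
lemma reach_nil {X : Type*} (T : AugmentedTree X) :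
    ∀ u : List X, T.graph.Reachable u [] := by
  intro u
  induction u with
  | nil => exact SimpleGraph.Reachable.refl _
  | cons x u ih =>
    exact (SimpleGraph.Adj.reachable (Or.inr (Or.inr ⟨x, rfl⟩))).trans ih

/-- Pushing a horizontal edge (or equality) down along equal-length prefixes. -/
lemma push_down {X : Type*} (T : AugmentedTree X) :
    ∀ (w₁ w₂ v₁ v₂ : List X), w₁.length = w₂.length →
      (w₁ ++ v₁ = w₂ ++ v₂ ∨ T.horiz (w₁ ++ v₁) (w₂ ++ v₂)) →
      (v₁ = v₂ ∨ T.horiz v₁ v₂) := by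
  intro w₁
  induction w₁ with
  | nil =>
    intro w₂ v₁ v₂ hl h
    have : w₂ = [] := List.eq_nil_of_length_eq_zero hl.symm
    subst this; simpa using h
  | cons x w₁ ih =>
    intro w₂ v₁ v₂ hl h
    cases w₂ with
    | nil => simp at hl
    | cons y w₂ =>
      apply ih w₂ v₁ v₂ (by simpa using hl)
      rcases h with h | h
      · simp only [List.cons_append, List.cons.injEq] at h
        exact Or.inl h.2
      · simp only [List.cons_append] at h
        rcases T.horiz_push x y _ _ h with h' | h'
        · exact Or.inl h'
        · exact Or.inr h'

theorem stmt10 {X : Type*} (T : AugmentedTree X) (n : ℕ) (V₁ V₂ : Set (List X))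
    (hV₁ : ∀ v ∈ V₁, v.length = n) (hV₂ : ∀ v ∈ V₂, v.length = n)
    (hsep : ∀ a ∈ V₁, ∀ b ∈ V₂, 2 ≤ T.graph.dist a b) :
    ∀ a ∈ shadowSet V₁, ∀ b ∈ shadowSet V₂, 2 ≤ T.graph.dist a b := by
  intro a ha b hb
  simp only [shadowSet, Set.mem_iUnion, Cone, Set.mem_setOf_eq] at ha hb
  obtain ⟨v₁, hv₁, w₁, rfl⟩ := ha
  obtain ⟨v₂, hv₂, w₂, rfl⟩ := hb
  have hlen : v₁.length = v₂.length := (hV₁ v₁ hv₁).trans (hV₂ v₂ hv₂).symm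
  have hd := hsep v₁ hv₁ v₂ hv₂
  -- consequences of the separation hypothesis
  have hne : v₁ ≠ v₂ := by
    rintro rfl
    simp [SimpleGraph.dist_self] at hd
  have hnadj : ¬ T.graph.Adj v₁ v₂ := by
    intro h
    have := SimpleGraph.dist_eq_one_iff_adj.mpr h
    omega
  have hnh : ¬ T.horiz v₁ v₂ := fun h => hnadj (Or.inl h)
  -- now show dist (w₁++v₁) (w₂++v₂) ≥ 2
  have hr : T.graph.Reachable (w₁ ++ v₁) (w₂ ++ v₂) :=
    (reach_nil T _).trans (reach_nil T _).symm
  have hne' : w₁ ++ v₁ ≠ w₂ ++ v₂ := by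
    intro h
    have hwl : w₁.length = w₂.length := by
      have := congrArg List.length h; simp at this; omega
    rcases push_down T w₁ w₂ v₁ v₂ hwl (Or.inl h) with h' | h'
    · exact hne h'
    · exact hnh h'
  have hnadj' : ¬ T.graph.Adj (w₁ ++ v₁) (w₂ ++ v₂) := by
    rintro (h | ⟨x, hx⟩ | ⟨x, hx⟩)
    · have hwl : w₁.length = w₂.length := by
        have := T.horiz_length _ _ h; simp at this; omega
      rcases push_down T w₁ w₂ v₁ v₂ hwl (Or.inr h) with h' | h'
      · exact hne h'
      · exact hnh h'
    · -- w₂ ++ v₂ = x :: (w₁ ++ v₁)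
      have : w₂ ++ v₂ = (x :: w₁) ++ v₁ := by simpa using hx
      have hwl : (x :: w₁).length = w₂.length := by
        have := congrArg List.length this; simp at this ⊢; omega
      rcases push_down T (x :: w₁) w₂ v₁ v₂ hwl (Or.inl this.symm) with h' | h'
      · exact hne h'
      · exact hnh h'
    · have : w₁ ++ v₁ = (x :: w₂) ++ v₂ := by simpa using hx
      have hwl : w₁.length = (x :: w₂).length := by
        have := congrArg List.length this; simp at this ⊢; omega
      rcases push_down T w₁ (x :: w₂) v₁ v₂ hwl (Or.inl this) with h' | h'
      · exact hne h'
      · exact hnh h'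
  have h0 : T.graph.dist (w₁ ++ v₁) (w₂ ++ v₂) ≠ 0 := by
    intro h
    exact hne' (hr.dist_eq_zero_iff.mp h)
  have h1 : T.graph.dist (w₁ ++ v₁) (w₂ ++ v₂) ≠ 1 := by
    intro h
    exact hnadj' (SimpleGraph.dist_eq_one_iff_adj.mp h)
  omega
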